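/- arXiv:2111.11358 — 2 statements merged into one kernel-verified Lean document; each statement's English description precedes it below -/
import Mathlib

section
/- Let A be an m×n matrix with nonnegative entries and unit-norm rows, b ≥ 0, and let θ ∈ R^n with ||θ||_2 ≤ E. For any x violating Ax ≤ b with nearest feasible point x_0 such that x - x_0 lies in the conic hull of the active rows A' of A (all tight at x_0), we have θ^T(x - x_0) ≤ E · Σ_i max(A'_i x - b'_i, 0). In particular the utility gain from violating the constraints is at most E times the sum of positive constraint violations. -/
open scoped RealInnerProductSpace

theorem stmt_5 (n m : ℕ) (E : ℝ)
    (θ : EuclideanSpace ℝ (Fin n)) (hθ : ‖θ‖ ≤ E)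
    (A : Fin m → EuclideanSpace ℝ (Fin n)) (b : Fin m → ℝ)
    (hunit : ∀ i, ‖A i‖ = 1) (hA : ∀ i j, 0 ≤ A i j) (hb : ∀ i, 0 ≤ b i)
    (x x0 : EuclideanSpace ℝ (Fin n))
    (hinfeas : ∃ i, b i < ⟪A i, x⟫)
    (htight : ∀ i, ⟪A i, x0⟫ = b i)
    (k : Fin m → ℝ) (hk : ∀ i, 0 ≤ k i)
    (hcone : x - x0 = ∑ i, k i • A i) :
    ⟪θ, x - x0⟫ ≤ E * ∑ i, max (⟪A i, x⟫ - b i) 0 := by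
  have hE : 0 ≤ E := le_trans (norm_nonneg θ) hθ
  have hinner : ∀ i j, (0:ℝ) ≤ ⟪A i, A j⟫ := by
    intro i j
    rw [PiLp.inner_apply]
    refine Finset.sum_nonneg fun l _ => ?_
    simpa using mul_nonneg (hA j l) (hA i l)
  have hki : ∀ i, k i ≤ max (⟪A i, x⟫ - b i) 0 := by
    intro i
    refine le_trans ?_ (le_max_left _ _)
    have h2 : ⟪A i, x - x0⟫ = ⟪A i, x⟫ - b i := by
      rw [inner_sub_right, htight i]
    rw [← h2, hcone, inner_sum]
    simp only [real_inner_smul_right]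
    have hAi : ⟪A i, A i⟫ = (1:ℝ) := by
      rw [real_inner_self_eq_norm_sq, hunit i]; norm_num
    have := Finset.single_le_sum (f := fun j => k j * ⟪A i, A j⟫)
      (fun j _ => mul_nonneg (hk j) (hinner i j)) (Finset.mem_univ i)
    simpa [hAi, hunit] using this
  have hnorm : ‖x - x0‖ ≤ ∑ i, max (⟪A i, x⟫ - b i) 0 := by
    calc ‖x - x0‖ = ‖∑ i, k i • A i‖ := by rw [hcone]
    _ ≤ ∑ i, ‖k i • A i‖ := norm_sum_le _ _
    _ = ∑ i, k i := by
        refine Finset.sum_congr rfl fun i _ => ?_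
        rw [norm_smul, hunit i, Real.norm_eq_abs, abs_of_nonneg (hk i), mul_one]
    _ ≤ _ := Finset.sum_le_sum fun i _ => hki i
  calc ⟪θ, x - x0⟫ ≤ ‖θ‖ * ‖x - x0‖ := real_inner_le_norm _ _
  _ ≤ E * ∑ i, max (⟪A i, x⟫ - b i) 0 :=
      mul_le_mul hθ hnorm (norm_nonneg _) hE
end

section
/- Let α_1, ..., α_n ∈ R^n be linearly independent unit vectors, and let P be an invertible matrix such that {P α_i} is an orthonormal basis of R^n. Let λ_max be the largest eigenvalue of P^T P. Then for every unit vector θ in the dual cone {θ : α_i^T θ ≥ 0 for all i}, we have max_i α_i^T θ ≥ 1/(√n · λ_max). -/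
open Matrix

lemma rayleigh_le {n : ℕ} (Q : Matrix (Fin n) (Fin n) ℝ) (hQ : Q.IsHermitian)
    (lam : ℝ) (hlam : IsGreatest (Set.range hQ.eigenvalues) lam) (v : Fin n → ℝ) :
    v ⬝ᵥ (Q *ᵥ v) ≤ lam * (v ⬝ᵥ v) := by
  set U : Matrix (Fin n) (Fin n) ℝ := (hQ.eigenvectorUnitary : Matrix (Fin n) (Fin n) ℝ) with hU
  set y : Fin n → ℝ := (star U) *ᵥ v with hy
  have hUU : U * star U = 1 := mul_eq_one_comm.mp (Unitary.coe_star_mul_self hQ.eigenvectorUnitary)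
  have hsU : star U = Uᵀ := rfl
  have h1 : v ⬝ᵥ (Q *ᵥ v) = ∑ i, hQ.eigenvalues i * (y i)^2 := by
    conv_lhs => rw [hQ.spectral_theorem, Unitary.conjStarAlgAut_apply]
    rw [← mulVec_mulVec, ← mulVec_mulVec, dotProduct_mulVec, ← mulVec_transpose]
    simp only [← hU, ← hsU, ← hy]
    simp [dotProduct, mulVec_diagonal, pow_two, mul_comm, mul_left_comm]
  have h2 : v ⬝ᵥ v = ∑ i, (y i)^2 := by
    have : y ⬝ᵥ y = v ⬝ᵥ ((U * star U) *ᵥ v) := by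
      rw [hy, hsU, dotProduct_mulVec, vecMul_transpose, ← mulVec_mulVec, ← hsU]
      exact dotProduct_comm _ _
    rw [hUU] at this
    simp only [one_mulVec] at this
    rw [← this]
    simp [dotProduct, pow_two]
  rw [h1, h2, Finset.mul_sum]
  apply Finset.sum_le_sum
  intro i _
  have := hlam.2 ⟨i, rfl⟩
  nlinarith [sq_nonneg (y i)]

lemma sum_smul_dotProduct {n : ℕ} (c : Fin n → ℝ) (α : Fin n → (Fin n → ℝ)) (w : Fin n → ℝ) :
    (∑ i, c i • α i) ⬝ᵥ w = ∑ i, c i * (α i ⬝ᵥ w) := by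
  simp only [dotProduct, Finset.sum_apply, Pi.smul_apply, smul_eq_mul, Finset.sum_mul,
    Finset.mul_sum]
  rw [Finset.sum_comm]
  exact Finset.sum_congr rfl fun i _ => Finset.sum_congr rfl fun j _ => by ring

theorem stmt_15 (n : ℕ) (α : Fin n → (Fin n → ℝ))
    (hunit : ∀ i, α i ⬝ᵥ α i = 1)
    (hindep : LinearIndependent ℝ α)
    (P : Matrix (Fin n) (Fin n) ℝ) (hP : IsUnit P.det)
    (horth : ∀ i j, (P *ᵥ α i) ⬝ᵥ (P *ᵥ α j) = if i = j then (1:ℝ) else 0)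
    (hherm : (P.transpose * P).IsHermitian)
    (lammax : ℝ) (hlam : IsGreatest (Set.range hherm.eigenvalues) lammax)
    (θ : Fin n → ℝ) (hθ : θ ⬝ᵥ θ = 1) (hdual : ∀ i, 0 ≤ α i ⬝ᵥ θ) :
    ∃ i, 1 / (Real.sqrt n * lammax) ≤ α i ⬝ᵥ θ := by
  have hn : 0 < n := by
    rcases Nat.eq_zero_or_pos n with h | h
    · exfalso; subst h; simp [dotProduct] at hθ
    · exact h
  haveI : Nonempty (Fin n) := ⟨⟨0, hn⟩⟩
  set Q := P.transpose * P with hQdef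
  -- key identity
  have key : ∀ a b : Fin n → ℝ, a ⬝ᵥ (Q *ᵥ b) = (P *ᵥ a) ⬝ᵥ (P *ᵥ b) := by
    intro a b
    rw [hQdef, ← mulVec_mulVec, dotProduct_mulVec, vecMul_transpose]
  have keyδ : ∀ i j, α i ⬝ᵥ (Q *ᵥ α j) = if i = j then (1:ℝ) else 0 := fun i j => by
    rw [key]; exact horth i j
  -- basis
  have hcard : Fintype.card (Fin n) = Module.finrank ℝ (Fin n → ℝ) := by simp
  set b := basisOfLinearIndependentOfCardEqFinrank hindep hcard with hb
  have hbcoe : ⇑b = α := coe_basisOfLinearIndependentOfCardEqFinrank hindep hcard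
  set c : Fin n → ℝ := fun i => b.repr θ i with hc
  have hθrepr : θ = ∑ i, c i • α i := by
    conv_lhs => rw [← b.sum_repr θ]
    simp [hbcoe, hc]
  -- c j = α j ⬝ Q θ  (via symmetry)
  have hcj : ∀ j, θ ⬝ᵥ (Q *ᵥ α j) = c j := by
    intro j
    conv_lhs => rw [hθrepr]
    rw [sum_smul_dotProduct]
    simp [keyδ]
  have h1 : ∑ i, c i * (α i ⬝ᵥ θ) = 1 := by
    rw [← sum_smul_dotProduct, ← hθrepr, hθ]
  have h2 : ∑ i, (c i)^2 = θ ⬝ᵥ (Q *ᵥ θ) := by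
    have hsym : ∀ j, α j ⬝ᵥ (Q *ᵥ θ) = c j := by
      intro j
      rw [key, dotProduct_comm, ← key, hcj]
    calc ∑ i, (c i)^2 = ∑ i, c i * (α i ⬝ᵥ (Q *ᵥ θ)) :=
          Finset.sum_congr rfl fun i _ => by rw [hsym, pow_two]
      _ = (∑ i, c i • α i) ⬝ᵥ (Q *ᵥ θ) := (sum_smul_dotProduct _ _ _).symm
      _ = θ ⬝ᵥ (Q *ᵥ θ) := by rw [← hθrepr]
  have hray : θ ⬝ᵥ (Q *ᵥ θ) ≤ lammax := by
    have := rayleigh_le Q hherm lammax hlam θ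
    rwa [hθ, mul_one] at this
  have hlam1 : (1:ℝ) ≤ lammax := by
    have i0 : Fin n := ⟨0, hn⟩
    have := rayleigh_le Q hherm lammax hlam (α i0)
    rw [hunit i0, mul_one] at this
    have h10 : α i0 ⬝ᵥ (Q *ᵥ α i0) = 1 := by rw [keyδ]; simp
    linarith [h10 ▸ this]
  -- max element
  obtain ⟨i, -, hi⟩ := Finset.exists_max_image Finset.univ (fun i => α i ⬝ᵥ θ)
    ⟨⟨0, hn⟩, Finset.mem_univ _⟩
  refine ⟨i, ?_⟩
  set t : Fin n → ℝ := fun j => α j ⬝ᵥ θ with ht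
  have hti : 0 ≤ t i := hdual i
  -- Cauchy-Schwarz
  have hcs := Finset.sum_mul_sq_le_sq_mul_sq Finset.univ c t
  have hsum_t : ∑ j, (t j)^2 ≤ n * (t i)^2 := by
    calc ∑ j, (t j)^2 ≤ ∑ _j : Fin n, (t i)^2 := by
          apply Finset.sum_le_sum
          intro j _
          have := hi j (Finset.mem_univ j)
          nlinarith [hdual j]
      _ = n * (t i)^2 := by simp [Finset.sum_const, mul_comm]
  have hone : (1:ℝ) ≤ lammax * (n * (t i)^2) := by
    have hc2 : ∑ j, (c j)^2 ≤ lammax := le_trans (le_of_eq h2) hray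
    have h1' : (∑ j, c j * t j) = 1 := h1
    have h0 : (0:ℝ) ≤ ∑ j, (t j)^2 := Finset.sum_nonneg fun j _ => sq_nonneg _
    nlinarith [hcs, hsum_t, hc2]
  have hs : (0:ℝ) < Real.sqrt n := Real.sqrt_pos.mpr (by exact_mod_cast hn)
  have hs2 : (Real.sqrt n)^2 = n := Real.sq_sqrt (by positivity)
  have hx0 : 0 ≤ t i * (Real.sqrt n * lammax) :=
    mul_nonneg hti (mul_nonneg hs.le (by linarith))
  have hx2 : (t i * (Real.sqrt n * lammax))^2 = lammax * lammax * ((n:ℝ) * (t i)^2) := by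
    rw [mul_pow, mul_pow, hs2]; ring
  have hxsq : 1 ≤ (t i * (Real.sqrt n * lammax))^2 := by nlinarith [hone, hlam1, hx2]
  rw [div_le_iff₀ (by positivity)]
  show (1:ℝ) ≤ t i * (Real.sqrt n * lammax)
  nlinarith [hxsq, hx0, sq_nonneg (t i * (Real.sqrt n * lammax) - 1)]
end
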